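/- Let τ > 0 and α > 1, with the symmetrical-optimum gains k_p = √(3/2)/(ατ), k_i = √(3/2)/(α³τ²) and crossover frequency ω_c = 1/(ατ). Then the phase margin φ_m(α) = π + arg H(i·ω_c) equals arctan(α) − arctan(1/α); moreover 0 < φ_m(α) < π/2 for every finite α > 1, and φ_m(α) → π/2 as α → ∞. -/

import Mathlib

open Real Filter

/-- Phase margin of the symmetrical-optimum SRF-PLL: with
`k_p = √(3/2)/(ατ)`, `k_i = √(3/2)/(α³τ²)` and `ω_c = 1/(ατ)`, the phase
margin `φ_m(α) = π + arg H(i ω_c)` equals `arctan α − arctan(1/α)`, satisfies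
`0 < φ_m(α) < π/2` for every `α > 1`, and tends to `π/2` as `α → ∞`. -/
theorem srf_pll_symmetrical_optimum_phase_margin (τ : ℝ) (hτ : 0 < τ)
    (φm : ℝ → ℝ)
    (hφm : ∀ α : ℝ, φm α = π + Complex.arg
      ((Real.sqrt (2 / 3) : ℂ) *
          (((Real.sqrt (3 / 2) / (α * τ) : ℝ) : ℂ) * (Complex.I * ((1 / (α * τ) : ℝ) : ℂ)) +
            ((Real.sqrt (3 / 2) / (α ^ 3 * τ ^ 2) : ℝ) : ℂ)) /
        ((Complex.I * ((1 / (α * τ) : ℝ) : ℂ)) ^ 2 *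
          ((τ : ℂ) * (Complex.I * ((1 / (α * τ) : ℝ) : ℂ)) + 1)))) :
    (∀ α : ℝ, 1 < α →
      φm α = arctan α - arctan (1 / α) ∧ 0 < φm α ∧ φm α < π / 2) ∧
    Tendsto φm atTop (nhds (π / 2)) := by
  have key : ∀ α : ℝ, 1 < α → φm α = arctan α - arctan (1 / α) := by
    intro α hα
    have hα0 : (0:ℝ) < α := lt_trans one_pos hα
    have hαC : (α:ℂ) ≠ 0 := by exact_mod_cast hα0.ne'
    have hτC : (τ:ℂ) ≠ 0 := by exact_mod_cast hτ.ne'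
    have hd : (0:ℝ) < α^2 + 1 := by positivity
    have hs : (Real.sqrt (2/3) : ℂ) * (Real.sqrt (3/2) : ℂ) = 1 := by
      rw [← Complex.ofReal_mul, ← Real.sqrt_mul (by norm_num : (0:ℝ) ≤ 2/3)]
      norm_num
    set z : ℂ := (Real.sqrt (2 / 3) : ℂ) *
          (((Real.sqrt (3 / 2) / (α * τ) : ℝ) : ℂ) * (Complex.I * ((1 / (α * τ) : ℝ) : ℂ)) +
            ((Real.sqrt (3 / 2) / (α ^ 3 * τ ^ 2) : ℝ) : ℂ)) /
        ((Complex.I * ((1 / (α * τ) : ℝ) : ℂ)) ^ 2 *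
          ((τ : ℂ) * (Complex.I * ((1 / (α * τ) : ℝ) : ℂ)) + 1)) with hzdef
    have hzval : z = ((-2*α/(α^2+1) : ℝ) : ℂ) + ((-(α^2-1)/(α^2+1) : ℝ) : ℂ) * Complex.I := by
      rw [hzdef]
      have hnum : (Real.sqrt (2 / 3) : ℂ) *
          (((Real.sqrt (3 / 2) / (α * τ) : ℝ) : ℂ) * (Complex.I * ((1 / (α * τ) : ℝ) : ℂ)) +
            ((Real.sqrt (3 / 2) / (α ^ 3 * τ ^ 2) : ℝ) : ℂ))
          = ((Real.sqrt (2/3) : ℂ) * (Real.sqrt (3/2) : ℂ)) *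
            ((1 / ((α:ℂ) * τ)) * (Complex.I * (1 / ((α:ℂ) * τ))) + 1 / ((α:ℂ)^3 * τ^2)) := by
        push_cast
        ring
      rw [hnum, hs, one_mul]
      have hden2 : (τ : ℂ) * (Complex.I * ((1 / (α * τ) : ℝ) : ℂ)) + 1 ≠ 0 := by
        intro h
        have h1 : (τ : ℂ) * (Complex.I * ((1 / (α * τ) : ℝ) : ℂ)) + 1 = 1 + Complex.I * (α:ℂ)⁻¹ := by
          push_cast
          field_simp
          ring
        rw [h1] at h
        have := congrArg Complex.re h
        simp at this
      have hdC : ((α:ℂ)^2 + 1) ≠ 0 := by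
        have h9 : (((α^2+1 : ℝ)):ℂ) ≠ 0 := by exact_mod_cast hd.ne'
        push_cast at h9; exact h9
      rw [div_eq_iff]
      · push_cast
        field_simp [hαC, hτC, hdC]
        ring_nf
        simp only [Complex.I_sq, Complex.I_pow_three, Complex.I_pow_four]
        ring
      · apply mul_ne_zero
        · apply pow_ne_zero
          apply mul_ne_zero Complex.I_ne_zero
          push_cast
          exact div_ne_zero one_ne_zero (mul_ne_zero hαC hτC)
        · exact hden2
    have hre : z.re = -2*α/(α^2+1) := by
      rw [hzval]
      simp only [Complex.add_re, Complex.ofReal_re, Complex.mul_re, Complex.ofReal_im,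
        Complex.I_re, Complex.I_im]
      ring
    have him : z.im = -(α^2-1)/(α^2+1) := by
      rw [hzval]
      simp only [Complex.add_im, Complex.ofReal_im, Complex.mul_im, Complex.ofReal_re,
        Complex.I_re, Complex.I_im]
      ring
    have hre_neg : z.re < 0 := by
      rw [hre]; exact div_neg_of_neg_of_pos (by linarith) hd
    have him_neg : z.im < 0 := by
      rw [him]; exact div_neg_of_neg_of_pos (by nlinarith) hd
    have harg_lt : Complex.arg z < -(π/2) := by
      rw [← not_le, Complex.neg_pi_div_two_le_arg_iff]
      push_neg
      exact ⟨hre_neg, him_neg⟩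
    have harg_gt : -π < Complex.arg z := Complex.neg_pi_lt_arg z
    have htan : Real.tan (π + Complex.arg z) = (α^2-1)/(2*α) := by
      rw [add_comm, Real.tan_periodic (Complex.arg z), Complex.tan_arg, hre, him]
      field_simp
    have hbound1 : -(π/2) < π + Complex.arg z := by linarith [Real.pi_pos]
    have hbound2 : π + Complex.arg z < π/2 := by linarith
    have : π + Complex.arg z = arctan ((α^2-1)/(2*α)) := by
      rw [← htan, Real.arctan_tan hbound1 hbound2]
    rw [hφm, ← hzdef, this]
    have h1 : arctan α + arctan (-(1/α)) = arctan ((α + -(1/α)) / (1 - α * -(1/α))) := by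
      apply Real.arctan_add
      have hm : α * -(1/α) = -1 := by field_simp
      rw [hm]; norm_num
    have h2 : (α + -(1/α)) / (1 - α * -(1/α)) = (α^2-1)/(2*α) := by
      rw [show α * -(1/α) = -1 by field_simp]
      field_simp
      ring
    rw [h2] at h1
    rw [← h1, Real.arctan_neg]
    ring
  constructor
  · intro α hα
    have hα0 : (0:ℝ) < α := lt_trans one_pos hα
    refine ⟨key α hα, ?_, ?_⟩
    · rw [key α hα]
      have h1 : arctan (1/α) < arctan α := by
        apply Real.arctan_strictMono
        rw [one_div]
        exact lt_trans (inv_lt_one_of_one_lt₀ hα) hα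
      linarith
    · rw [key α hα]
      have h1 : arctan α < π/2 := Real.arctan_lt_pi_div_two α
      have h2 : 0 < arctan (1/α) := by
        rw [show (0:ℝ) = arctan 0 from Real.arctan_zero.symm]
        exact Real.arctan_strictMono (by positivity)
      linarith
  · have hev : φm =ᶠ[atTop] fun α => arctan α - arctan (1/α) := by
      filter_upwards [eventually_gt_atTop 1] with α hα
      exact key α hα
    rw [Filter.tendsto_congr' hev]
    have h1 : Tendsto (fun α : ℝ => arctan α) atTop (nhds (π/2)) :=
      Real.tendsto_arctan_atTop.mono_right nhdsWithin_le_nhds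
    have h2 : Tendsto (fun α : ℝ => arctan (1/α)) atTop (nhds 0) := by
      have h0 : Tendsto (fun α : ℝ => 1/α) atTop (nhds 0) := by
        simpa only [one_div] using tendsto_inv_atTop_zero
      have := (Real.continuous_arctan.tendsto 0).comp h0
      simpa [Function.comp_def] using this
    have := h1.sub h2
    simpa using this
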